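/- Let φ(x,y) = ε(x² + xy + y² - 1) with ε > 0, and let (x(t), y(t)) be a solution of ẋ = y, ẏ = -x - yφ(x,y) defined on [0,∞) with x(0)² + y(0)² ≤ 2. Then x(t)² + y(t)² ≤ 2 for all t ≥ 0. -/

import Mathlib

lemma invariant_aux {f f' : ℝ → ℝ} {c : ℝ}
    (hf : ∀ t : ℝ, 0 ≤ t → HasDerivAt f (f' t) t)
    (hd : ∀ t : ℝ, 0 ≤ t → c ≤ f t → f' t ≤ 0)
    (h0 : f 0 ≤ c) : ∀ t : ℝ, 0 ≤ t → f t ≤ c := by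
  intro t₁ ht₁
  by_contra hgt
  push_neg at hgt
  have hcont : ContinuousOn f (Set.Icc 0 t₁) := fun u hu =>
    ((hf u hu.1).continuousAt).continuousWithinAt
  have hScl : IsClosed (Set.Icc 0 t₁ ∩ f ⁻¹' Set.Iic c) :=
    hcont.preimage_isClosed_of_isClosed isClosed_Icc isClosed_Iic
  have hScomp : IsCompact (Set.Icc 0 t₁ ∩ f ⁻¹' Set.Iic c) :=
    isCompact_Icc.of_isClosed_subset hScl Set.inter_subset_left
  have h0S : (0:ℝ) ∈ Set.Icc 0 t₁ ∩ f ⁻¹' Set.Iic c := ⟨⟨le_refl 0, ht₁⟩, h0⟩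
  set s := sSup (Set.Icc 0 t₁ ∩ f ⁻¹' Set.Iic c) with hs
  have hsS : s ∈ Set.Icc 0 t₁ ∩ f ⁻¹' Set.Iic c := hScomp.sSup_mem ⟨0, h0S⟩
  have hs0 : 0 ≤ s := hsS.1.1
  have hst : s ≤ t₁ := hsS.1.2
  have hfs : f s ≤ c := hsS.2
  have hst' : s < t₁ := lt_of_le_of_ne hst fun h => absurd hfs (by rw [h]; exact not_le.mpr hgt)
  have hgt' : ∀ u, s < u → u ≤ t₁ → c < f u := by
    intro u hsu hut
    by_contra h
    push_neg at h
    have hu : u ∈ Set.Icc 0 t₁ ∩ f ⁻¹' Set.Iic c := ⟨⟨le_trans hs0 hsu.le, hut⟩, h⟩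
    exact absurd (le_csSup hScomp.bddAbove hu) (not_le.mpr hsu)
  -- f antitone on [s, t₁]
  have hanti : AntitoneOn f (Set.Icc s t₁) := by
    apply antitoneOn_of_deriv_nonpos (convex_Icc s t₁)
    · exact hcont.mono (Set.Icc_subset_Icc_left hs0)
    · intro u hu
      rw [interior_Icc] at hu
      exact ((hf u (le_trans hs0 hu.1.le)).differentiableAt).differentiableWithinAt
    · intro u hu
      rw [interior_Icc] at hu
      have hu0 : 0 ≤ u := le_trans hs0 hu.1.le
      rw [(hf u hu0).deriv]
      exact hd u hu0 (hgt' u hu.1 hu.2.le).le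
  have := hanti (Set.left_mem_Icc.mpr hst'.le) (Set.right_mem_Icc.mpr hst'.le) hst'.le
  linarith

/-- For φ = ε(x² + xy + y² - 1), ε > 0, the disk of radius √2 is positively
    invariant for the system ẋ = y, ẏ = -x - y·φ(x,y). -/
theorem stmt_14 (ε : ℝ) (hε : 0 < ε)
    (φ : ℝ × ℝ → ℝ)
    (hφ : φ = fun p => ε * (p.1 ^ 2 + p.1 * p.2 + p.2 ^ 2 - 1))
    (x y : ℝ → ℝ)
    (hx : ∀ t : ℝ, 0 ≤ t → HasDerivAt x (y t) t)
    (hy : ∀ t : ℝ, 0 ≤ t → HasDerivAt y (-(x t) - y t * φ (x t, y t)) t)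
    (h0 : x 0 ^ 2 + y 0 ^ 2 ≤ 2) :
    ∀ t : ℝ, 0 ≤ t → x t ^ 2 + y t ^ 2 ≤ 2 := by
  subst hφ
  have key := invariant_aux (f := fun t => x t ^ 2 + y t ^ 2)
    (f' := fun t => 2 * x t ^ 1 * y t + 2 * y t ^ 1 *
      (-(x t) - y t * (ε * (x t ^ 2 + x t * y t + y t ^ 2 - 1)))) (c := 2)
    (fun t ht => ((hx t ht).pow 2).add ((hy t ht).pow 2))
    (fun t ht hge => by
      have h1 : 0 ≤ x t ^ 2 + x t * y t + y t ^ 2 - 1 := by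
        nlinarith [sq_nonneg (x t + y t)]
      have h2 : 0 ≤ ε * (y t ^ 2 * (x t ^ 2 + x t * y t + y t ^ 2 - 1)) :=
        mul_nonneg hε.le (mul_nonneg (sq_nonneg _) h1)
      nlinarith [h2])
    h0
  exact key
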